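/- The 4×4 real matrix D with rows (δ,0,γ,γ), (0,δ,γ,γ), (γ,γ,δ,0), (γ,γ,0,δ) is positive semi-definite whenever |γ| ≤ δ/2 and δ ≥ 0. -/

import Mathlib

theorem kossakowski_model1_posSemidef (δ γ : ℝ) (hδ : 0 ≤ δ) (hγ : |γ| ≤ δ / 2) :
    (Matrix.of ![![δ, 0, γ, γ], ![0, δ, γ, γ], ![γ, γ, δ, 0], ![γ, γ, 0, δ]] :
      Matrix (Fin 4) (Fin 4) ℝ).PosSemidef := by
  rw [Matrix.posSemidef_iff_dotProduct_mulVec]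
  constructor
  · ext i j
    fin_cases i <;> fin_cases j <;>
      simp [Matrix.conjTranspose_apply, Matrix.vecHead, Matrix.vecTail]
  · intro x
    have hx := Fin.sum_univ_four fun i => x i * x i
    simp only [Matrix.mulVec, dotProduct, Fin.sum_univ_four, Matrix.of_apply,
      Matrix.cons_val', Matrix.cons_val_zero, Matrix.cons_val_one, Matrix.head_cons,
      Matrix.empty_val', Matrix.cons_val_fin_one, Matrix.head_fin_const,
      Matrix.cons_val_two, Matrix.cons_val_three, Matrix.tail_cons, star_trivial,
      RCLike.ofReal_real_eq_id, id]
    rcases abs_le.mp hγ with ⟨h1, h2⟩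
    nlinarith [sq_nonneg (x 0 + x 1 + x 2 + x 3), sq_nonneg (x 0 + x 1 - x 2 - x 3),
      sq_nonneg (x 0 - x 1), sq_nonneg (x 2 - x 3), sq_nonneg (x 0 + x 1), sq_nonneg (x 2 + x 3)]
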